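/- Let V be a real inner product space and f : V → V a map satisfying ⟨f(v), v⟩ = 0 for all v ∈ V. Apply an explicit s-stage Runge–Kutta method with strictly lower triangular coefficients a and weights b to f with initial value u₀ and step size h, producing stages y_i and update u₊(h), and write f_i := f(y_i). Then the following two exact identities hold: 2(‖u₀‖² − ⟨u₊(h), u₀⟩) = 2 h² Σ_{i,j} b_i a_{ij} ⟨f_i, f_j⟩ and ‖u₊(h) − u₀‖² = h² Σ_{i,j} b_i b_j ⟨f_i, f_j⟩. Consequently, whenever the denominators are nonzero, the relaxation parameter satisfies γ(h) = (2 Σ_{i,j} b_i a_{ij} ⟨f_i, f_j⟩) / (Σ_{i,j} b_i b_j ⟨f_i, f_j⟩). -/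

import Mathlib

open scoped RealInnerProductSpace

/-- For a vector field `f` with `⟪f(v), v⟫ = 0`, the explicit Runge–Kutta update
`u₊ = u₀ + h ∑ᵢ bᵢ f(yᵢ)` satisfies the exact identities
`2(‖u₀‖² - ⟪u₊, u₀⟫) = 2h² ∑ᵢⱼ bᵢ aᵢⱼ ⟪fᵢ, fⱼ⟫` and
`‖u₊ - u₀‖² = h² ∑ᵢⱼ bᵢ bⱼ ⟪fᵢ, fⱼ⟫`; consequently, whenever the denominators are
nonzero, the relaxation parameter equals `2 ∑ᵢⱼ bᵢ aᵢⱼ ⟪fᵢ, fⱼ⟫ / ∑ᵢⱼ bᵢ bⱼ ⟪fᵢ, fⱼ⟫`. -/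
theorem relaxation_parameter_rk_formula
    {V : Type*} [NormedAddCommGroup V] [InnerProductSpace ℝ V]
    (f : V → V) (hf : ∀ v : V, ⟪f v, v⟫ = 0)
    (s : ℕ) (a : Fin s → Fin s → ℝ) (ha : ∀ i j : Fin s, i ≤ j → a i j = 0)
    (b : Fin s → ℝ) (u₀ : V) (h : ℝ)
    (y : Fin s → V) (hy : ∀ i, y i = u₀ + h • ∑ j, a i j • f (y j))
    (uplus : V) (hup : uplus = u₀ + h • ∑ i, b i • f (y i)) :
    2 * (‖u₀‖ ^ 2 - ⟪uplus, u₀⟫)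
      = 2 * h ^ 2 * ∑ i, ∑ j, b i * a i j * ⟪f (y i), f (y j)⟫ ∧
    ‖uplus - u₀‖ ^ 2 = h ^ 2 * ∑ i, ∑ j, b i * b j * ⟪f (y i), f (y j)⟫ ∧
    (‖uplus - u₀‖ ^ 2 ≠ 0 → (∑ i, ∑ j, b i * b j * ⟪f (y i), f (y j)⟫) ≠ 0 →
      2 * ⟪u₀ - uplus, u₀⟫ / ‖uplus - u₀‖ ^ 2
        = 2 * (∑ i, ∑ j, b i * a i j * ⟪f (y i), f (y j)⟫)
            / ∑ i, ∑ j, b i * b j * ⟪f (y i), f (y j)⟫) := by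
  have hfi : ∀ i, ⟪f (y i), u₀⟫ = -(h * ∑ j, a i j * ⟪f (y i), f (y j)⟫) := by
    intro i
    have h0 : ⟪f (y i), u₀ + h • ∑ j, a i j • f (y j)⟫ = 0 := by
      rw [← hy i]; exact hf (y i)
    simp only [inner_add_right, inner_smul_right, inner_sum] at h0
    linarith
  have h1 : 2 * (‖u₀‖ ^ 2 - ⟪uplus, u₀⟫)
      = 2 * h ^ 2 * ∑ i, ∑ j, b i * a i j * ⟪f (y i), f (y j)⟫ := by
    rw [hup]
    simp only [inner_add_left, inner_smul_left, sum_inner, real_inner_self_eq_norm_sq,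
      RCLike.conj_to_real, hfi, Finset.mul_sum]
    ring_nf
    simp only [neg_mul, neg_neg, Finset.mul_sum, Finset.sum_mul, Finset.sum_neg_distrib]
    refine Finset.sum_congr rfl fun i _ => Finset.sum_congr rfl fun j _ => by ring
  have h2 : ‖uplus - u₀‖ ^ 2 = h ^ 2 * ∑ i, ∑ j, b i * b j * ⟪f (y i), f (y j)⟫ := by
    have hd : uplus - u₀ = h • ∑ i, b i • f (y i) := by rw [hup]; abel
    rw [← real_inner_self_eq_norm_sq, hd]
    simp only [inner_smul_left, inner_smul_right, sum_inner, inner_sum,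
      RCLike.conj_to_real, Finset.mul_sum, Finset.sum_mul]
    refine Finset.sum_congr rfl fun i _ => Finset.sum_congr rfl fun j _ => by
      rw [real_inner_comm]; ring
  refine ⟨h1, h2, fun hne hsum => ?_⟩
  have hinner : 2 * ⟪u₀ - uplus, u₀⟫ = 2 * (‖u₀‖ ^ 2 - ⟪uplus, u₀⟫) := by
    rw [inner_sub_left, real_inner_self_eq_norm_sq]
  have hh2 : h ^ 2 ≠ 0 := by
    intro h0
    rw [h2, h0, zero_mul] at hne
    exact hne rfl
  rw [hinner, h1, h2]
  have hh : h ≠ 0 := (pow_ne_zero_iff two_ne_zero).mp hh2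
  field_simp
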